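/- Let R be a finite nonempty multiset of integers, each at least 2, such that the sum over r in R of (r - 1/r) is strictly less than 23/6. Then R is one of the multisets {2}, {3}, {4}, or {2,2}. -/
import Mathlib

lemma map_eq (S : Multiset ℕ) : (S.map (fun r => (r : ℚ) - 1 / r)).sum
    = (S.map (fun r : ℕ => (r:ℚ) - 1/r)).sum := by
  induction S using Multiset.induction with
  | empty => simp
  | cons a s ih => simp_all [one_div]

lemma term_ge (r : ℕ) (hr : 2 ≤ r) : (3:ℚ)/2 ≤ (r : ℚ) - 1 / r := by
  have h2 : (2:ℚ) ≤ r := by exact_mod_cast hr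
  have hpos : (0:ℚ) < r := by linarith
  have : 1 / (r:ℚ) ≤ 1 / 2 := by
    apply one_div_le_one_div_of_le <;> linarith
  linarith

lemma sum_nonneg' (S : Multiset ℕ) (h2 : ∀ r ∈ S, 2 ≤ r) :
    (0:ℚ) ≤ (S.map (fun r : ℕ => (r : ℚ) - 1 / r)).sum := by
  apply Multiset.sum_nonneg
  intro x hx
  obtain ⟨r, hr, rfl⟩ := Multiset.mem_map.mp hx
  have := term_ge r (h2 r hr)
  linarith

lemma le_four (a : ℕ) (h2 : 2 ≤ a) (h : (a : ℚ) - 1 / a < 23 / 6) : a ≤ 4 := by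
  by_contra h5
  push_neg at h5
  have : (5:ℚ) ≤ a := by exact_mod_cast h5
  have hpos : (0:ℚ) < a := by linarith
  have : 1 / (a:ℚ) ≤ 1 / 5 := by
    apply one_div_le_one_div_of_le <;> linarith
  linarith

lemma eq_two (a : ℕ) (h2 : 2 ≤ a) (h : (a : ℚ) - 1 / a < 7 / 3) : a = 2 := by
  by_contra h3
  have h3' : 3 ≤ a := by omega
  have : (3:ℚ) ≤ a := by exact_mod_cast h3'
  have hpos : (0:ℚ) < a := by linarith
  have : 1 / (a:ℚ) ≤ 1 / 3 := by
    apply one_div_le_one_div_of_le <;> linarith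
  linarith

theorem basket_enum_q_eq_6 (R : Multiset ℕ) (hne : R ≠ 0)
    (h2 : ∀ r ∈ R, 2 ≤ r)
    (hsum : (R.map (fun r => (r : ℚ) - 1 / r)).sum < 23 / 6) :
    R = {2} ∨ R = {3} ∨ R = {4} ∨ R = {2, 2} := by
  rw [map_eq] at hsum
  obtain ⟨a, ha⟩ := Multiset.exists_mem_of_ne_zero hne
  obtain ⟨S, rfl⟩ := Multiset.exists_cons_of_mem ha
  have ha2 : 2 ≤ a := h2 a (Multiset.mem_cons_self _ _)
  have hS2 : ∀ r ∈ S, 2 ≤ r := fun r hr => h2 r (Multiset.mem_cons_of_mem hr)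
  simp only [Multiset.map_cons, Multiset.sum_cons] at hsum
  rcases eq_or_ne S 0 with rfl | hSne
  · -- singleton case
    simp only [Multiset.map_zero, Multiset.sum_zero, add_zero] at hsum
    have ha4 : a ≤ 4 := le_four a ha2 hsum
    interval_cases a
    · left; rfl
    · right; left; rfl
    · right; right; left; rfl
  · obtain ⟨b, hbm⟩ := Multiset.exists_mem_of_ne_zero hSne
    obtain ⟨T, rfl⟩ := Multiset.exists_cons_of_mem hbm
    have hb2 : 2 ≤ b := hS2 b (Multiset.mem_cons_self _ _)
    have hT2 : ∀ r ∈ T, 2 ≤ r := fun r hr => hS2 r (Multiset.mem_cons_of_mem hr)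
    simp only [Multiset.map_cons, Multiset.sum_cons] at hsum
    have hTnn := sum_nonneg' T hT2
    have hta := term_ge a ha2
    have htb := term_ge b hb2
    have ha : a = 2 := eq_two a ha2 (by linarith)
    have hb : b = 2 := eq_two b hb2 (by linarith)
    subst ha hb
    have hT0 : T = 0 := by
      by_contra hTne
      obtain ⟨c, hcm⟩ := Multiset.exists_mem_of_ne_zero hTne
      obtain ⟨U, rfl⟩ := Multiset.exists_cons_of_mem hcm
      have hc2 : 2 ≤ c := hT2 c (Multiset.mem_cons_self _ _)
      have hU2 : ∀ r ∈ U, 2 ≤ r := fun r hr => hT2 r (Multiset.mem_cons_of_mem hr)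
      simp only [Multiset.map_cons, Multiset.sum_cons] at hTnn hsum
      have htc := term_ge c hc2
      have hUnn := sum_nonneg' U hU2
      have h22 : ((2:ℕ):ℚ) - 1 / ((2:ℕ):ℚ) = 3 / 2 := by norm_num
      linarith
    subst hT0
    right; right; right; rfl
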